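/- Let X, Xَ_1, ..., X_n, X_{n+1} be i.i.d. with a density, x ∈ ℝ^d, and 1 ≤ k_{n+1} ≤ n. Then the identity E(‖X−x‖_{(k_{n+1},n)} · F_{‖X−x‖}(‖X−x‖_{(k_{n+1},n)})) = (k_{n+1}/(n+1)) · E(‖X−x‖_{(k_{n+1}+1, n+1)}) holds, where ‖X−x‖_{(k,m)} is the k-th order statistic of a sample of size m of ‖X−x‖. -/

import Mathlib

open MeasureTheory ProbabilityTheory

/-- The `k`-th order statistic of the family `(v i)_{i ∈ s}` : the smallest `t` such that at
least `k` of the values `v i`, `i ∈ s`, are `≤ t`. -/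
noncomputable def orderStat (s : Finset ℕ) (v : ℕ → ℝ) (k : ℕ) : ℝ :=
  sInf {t : ℝ | k ≤ (s.filter (fun i => v i ≤ t)).card}

section OrderStat

variable {s : Finset ℕ} {v : ℕ → ℝ} {k : ℕ} {t u : ℝ}

lemma orderStat_card_mono (s : Finset ℕ) (v : ℕ → ℝ) (h : t ≤ u) :
    (s.filter (fun i => v i ≤ t)).card ≤ (s.filter (fun i => v i ≤ u)).card := by
  apply Finset.card_le_card
  intro i hi
  rw [Finset.mem_filter] at hi ⊢
  exact ⟨hi.1, le_trans hi.2 h⟩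

lemma orderStat_set_nonempty (hk1 : 1 ≤ k) (hks : k ≤ s.card) :
    {t : ℝ | k ≤ (s.filter (fun i => v i ≤ t)).card}.Nonempty := by
  have hs : s.Nonempty := Finset.card_pos.mp (lt_of_lt_of_le hk1 hks)
  refine ⟨s.sup' hs v, ?_⟩
  have h2 : s.filter (fun i => v i ≤ s.sup' hs v) = s :=
    Finset.filter_true_of_mem (fun i hi => Finset.le_sup' v hi)
  simp only [Set.mem_setOf_eq, h2]
  exact hks

lemma orderStat_set_bddBelow (hk1 : 1 ≤ k) (hks : k ≤ s.card) :
    BddBelow {t : ℝ | k ≤ (s.filter (fun i => v i ≤ t)).card} := by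
  have hs : s.Nonempty := Finset.card_pos.mp (lt_of_lt_of_le hk1 hks)
  refine ⟨s.inf' hs v, fun u hu => ?_⟩
  have : (s.filter (fun i => v i ≤ u)).Nonempty :=
    Finset.card_pos.mp (lt_of_lt_of_le hk1 hu)
  obtain ⟨i, hi⟩ := this
  rw [Finset.mem_filter] at hi
  exact le_trans (Finset.inf'_le v hi.1) hi.2

/-- locally constant to the right -/
lemma orderStat_exists_eps (s : Finset ℕ) (v : ℕ → ℝ) (t : ℝ) :
    ∃ ε > (0:ℝ), s.filter (fun i => v i ≤ t + ε) = s.filter (fun i => v i ≤ t) := by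
  classical
  set A := s.filter (fun i => t < v i) with hAdef
  by_cases hAne : A.Nonempty
  · have htA : t < A.inf' hAne v := by
      obtain ⟨j, hj, hjv⟩ := Finset.exists_mem_eq_inf' hAne v
      rw [hjv]; exact (Finset.mem_filter.mp hj).2
    refine ⟨(A.inf' hAne v - t) / 2, by linarith, ?_⟩
    apply Finset.filter_congr
    intro i hi
    constructor
    · intro hle
      by_contra hgt
      push_neg at hgt
      have hiA : i ∈ A := Finset.mem_filter.mpr ⟨hi, hgt⟩
      have := Finset.inf'_le v hiA
      linarith
    · intro hle; linarith
  · refine ⟨1, one_pos, ?_⟩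
    apply Finset.filter_congr
    intro i hi
    have h2 : ¬ t < v i := fun hlt => hAne ⟨i, Finset.mem_filter.mpr ⟨hi, hlt⟩⟩
    push_neg at h2
    exact ⟨fun _ => h2, fun _ => by linarith⟩

lemma orderStat_le_iff (hk1 : 1 ≤ k) (hks : k ≤ s.card) :
    orderStat s v k ≤ t ↔ k ≤ (s.filter (fun i => v i ≤ t)).card := by
  constructor
  · intro h
    by_contra hc
    push_neg at hc
    obtain ⟨ε, hε, hfe⟩ := orderStat_exists_eps s v t
    have hlt : orderStat s v k < t + ε/2 := lt_of_le_of_lt h (by linarith)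
    obtain ⟨u, huT, hult⟩ :=
      exists_lt_of_csInf_lt (orderStat_set_nonempty hk1 hks) hlt
    have : k ≤ (s.filter (fun i => v i ≤ t + ε)).card :=
      le_trans huT (orderStat_card_mono s v (by linarith))
    rw [hfe] at this
    omega
  · intro h
    exact csInf_le (orderStat_set_bddBelow hk1 hks) h

lemma lt_orderStat_iff (hk1 : 1 ≤ k) (hks : k ≤ s.card) :
    t < orderStat s v k ↔ (s.filter (fun i => v i ≤ t)).card < k := by
  rw [← not_le, orderStat_le_iff hk1 hks, not_le]

lemma orderStat_lt_iff (hk1 : 1 ≤ k) (hks : k ≤ s.card) :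
    orderStat s v k < u ↔ k ≤ (s.filter (fun i => v i < u)).card := by
  constructor
  · intro h
    obtain ⟨t, ht1, ht2⟩ := exists_between h
    have := (orderStat_le_iff hk1 hks).mp (le_of_lt ht1)
    refine le_trans this (Finset.card_le_card ?_)
    intro i hi
    rw [Finset.mem_filter] at hi ⊢
    exact ⟨hi.1, lt_of_le_of_lt hi.2 ht2⟩
  · intro h
    classical
    set B := s.filter (fun i => v i < u) with hB
    have hBne : B.Nonempty := Finset.card_pos.mp (lt_of_lt_of_le hk1 h)
    have hsup : B.sup' hBne v < u := by
      obtain ⟨j, hj, hjv⟩ := Finset.exists_mem_eq_sup' hBne v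
      rw [hjv]; exact (Finset.mem_filter.mp hj).2
    have : k ≤ (s.filter (fun i => v i ≤ B.sup' hBne v)).card := by
      refine le_trans h (Finset.card_le_card ?_)
      intro i hi
      rw [Finset.mem_filter] at hi ⊢
      refine ⟨hi.1, Finset.le_sup' v ?_⟩
      exact Finset.mem_filter.mpr hi
    exact lt_of_le_of_lt ((orderStat_le_iff hk1 hks).mpr this) hsup

lemma le_orderStat_iff (hk1 : 1 ≤ k) (hks : k ≤ s.card) :
    u ≤ orderStat s v k ↔ (s.filter (fun i => v i < u)).card < k := by
  rw [← not_lt, orderStat_lt_iff hk1 hks, not_le]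

lemma orderStat_nonneg (hk1 : 1 ≤ k) (hks : k ≤ s.card) (hv : ∀ i ∈ s, 0 ≤ v i) :
    0 ≤ orderStat s v k := by
  rw [le_orderStat_iff hk1 hks]
  have : s.filter (fun i => v i < 0) = ∅ := by
    apply Finset.filter_false_of_mem
    intro i hi
    exact not_lt.mpr (hv i hi)
  rw [this]
  simp only [Finset.card_empty]; omega

lemma orderStat_congr {v' : ℕ → ℝ} (h : ∀ i ∈ s, v i = v' i) :
    orderStat s v k = orderStat s v' k := by
  unfold orderStat
  congr 1
  ext t
  have : s.filter (fun i => v i ≤ t) = s.filter (fun i => v' i ≤ t) := by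
    apply Finset.filter_congr
    intro i hi
    rw [h i hi]
  simp only [Set.mem_setOf_eq, this]

lemma orderStat_insert {j₀ : ℕ} (hj₀ : j₀ ∉ s) (hk1 : 1 ≤ k) (hks : k ≤ s.card)
    (hle : v j₀ ≤ orderStat s v k) :
    orderStat (insert j₀ s) v (k + 1) = orderStat s v k := by
  classical
  unfold orderStat
  congr 1
  ext t
  simp only [Set.mem_setOf_eq]
  rw [Finset.filter_insert]
  constructor
  · intro h
    by_cases hc : v j₀ ≤ t
    · rw [if_pos hc] at h
      rw [Finset.card_insert_of_notMem (fun hmem => hj₀ (Finset.mem_filter.mp hmem).1)] at h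
      omega
    · rw [if_neg hc] at h
      omega
  · intro h
    have hjt : v j₀ ≤ t := le_trans hle ((orderStat_le_iff hk1 hks).mpr h)
    rw [if_pos hjt,
      Finset.card_insert_of_notMem (fun hmem => hj₀ (Finset.mem_filter.mp hmem).1)]
    omega

lemma orderStat_image {σ : ℕ → ℕ} (hσ : Set.InjOn σ s) :
    orderStat (s.image σ) v k = orderStat s (fun i => v (σ i)) k := by
  classical
  unfold orderStat
  congr 1
  ext t
  simp only [Set.mem_setOf_eq]
  rw [Finset.filter_image]
  rw [Finset.card_image_of_injOn (Set.InjOn.mono (fun i hi => (Finset.mem_filter.mp hi).1) hσ)]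

end OrderStat

section Rank

open Finset

lemma measurable_orderStat {α : Type*} [MeasurableSpace α] {s : Finset ℕ} {k : ℕ}
    (hk1 : 1 ≤ k) (hks : k ≤ s.card) {v : ℕ → α → ℝ} (hv : ∀ i, Measurable (v i)) :
    Measurable (fun a => orderStat s (fun i => v i a) k) := by
  classical
  apply measurable_of_Iic
  intro t
  have h1 : (fun a => orderStat s (fun i => v i a) k) ⁻¹' Set.Iic t
      = {a | k ≤ (s.filter (fun i => v i a ≤ t)).card} := by
    ext a
    simp only [Set.mem_preimage, Set.mem_Iic, Set.mem_setOf_eq]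
    exact orderStat_le_iff hk1 hks
  rw [h1]
  have h2 : Measurable (fun a => (s.filter (fun i => v i a ≤ t)).card) := by
    simp only [Finset.card_filter]
    apply Finset.measurable_sum
    intro i _
    exact Measurable.ite (measurableSet_le (hv i) measurable_const)
      measurable_const measurable_const
  exact measurableSet_le measurable_const h2

/-- the rank function -/
noncomputable def rnk (s : Finset ℕ) (v : ℕ → ℝ) (j : ℕ) : ℕ :=
  (s.filter (fun i => v i < v j)).card

lemma rnk_lt_rnk {s : Finset ℕ} {v : ℕ → ℝ} {j j' : ℕ} (hj : j ∈ s)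
    (hlt : v j < v j') : rnk s v j < rnk s v j' := by
  classical
  apply Finset.card_lt_card
  rw [Finset.ssubset_iff_of_subset]
  · exact ⟨j, Finset.mem_filter.mpr ⟨hj, hlt⟩, fun hmem => lt_irrefl _ (Finset.mem_filter.mp hmem).2⟩
  · intro i hi
    rw [Finset.mem_filter] at hi ⊢
    exact ⟨hi.1, lt_trans hi.2 hlt⟩

lemma rnk_injOn {s : Finset ℕ} {v : ℕ → ℝ} (hv : Set.InjOn v s) :
    Set.InjOn (rnk s v) s := by
  intro j hj j' hj' hr
  rcases lt_trichotomy (v j) (v j') with h | h | h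
  · exact absurd hr (Nat.ne_of_lt (rnk_lt_rnk hj h))
  · exact hv hj hj' h
  · exact absurd hr.symm (Nat.ne_of_lt (rnk_lt_rnk hj' h))

lemma rnk_image {s : Finset ℕ} {v : ℕ → ℝ} (hv : Set.InjOn v s) :
    s.image (rnk s v) = Finset.range s.card := by
  classical
  apply Finset.eq_of_subset_of_card_le
  · intro r hr
    rw [Finset.mem_image] at hr
    obtain ⟨j, hj, rfl⟩ := hr
    rw [Finset.mem_range]
    have : s.filter (fun i => v i < v j) ⊆ s.erase j := by
      intro i hi
      rw [Finset.mem_filter] at hi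
      rw [Finset.mem_erase]
      exact ⟨fun he => lt_irrefl _ (he ▸ hi.2), hi.1⟩
    calc rnk s v j ≤ (s.erase j).card := Finset.card_le_card this
      _ < s.card := Finset.card_erase_lt_of_mem hj
  · rw [Finset.card_range, Finset.card_image_of_injOn (rnk_injOn hv)]

lemma card_rnk_lt {s : Finset ℕ} {v : ℕ → ℝ} (hv : Set.InjOn v s) {k : ℕ}
    (hks : k ≤ s.card) :
    (s.filter (fun j => rnk s v j < k)).card = k := by
  classical
  have h1 : (s.filter (fun j => rnk s v j < k)).card
      = ((s.filter (fun j => rnk s v j < k)).image (rnk s v)).card := by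
    rw [Finset.card_image_of_injOn
      (Set.InjOn.mono (fun i hi => (Finset.mem_filter.mp hi).1) (rnk_injOn hv))]
  rw [h1]
  have h2 : (s.filter (fun j => rnk s v j < k)).image (rnk s v)
      = (s.image (rnk s v)).filter (fun r => r < k) := by
    rw [Finset.filter_image]
  rw [h2, rnk_image hv]
  have h3 : (Finset.range s.card).filter (fun r => r < k) = Finset.range k := by
    ext r
    simp only [Finset.mem_filter, Finset.mem_range]
    omega
  rw [h3, Finset.card_range]

lemma rnk_erase {s : Finset ℕ} {v : ℕ → ℝ} {j : ℕ} :
    ((s.erase j).filter (fun i => v i < v j)).card = rnk s v j := by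
  classical
  unfold rnk
  congr 1
  ext i
  simp only [Finset.mem_filter, Finset.mem_erase]
  constructor
  · rintro ⟨⟨_, hi⟩, hlt⟩; exact ⟨hi, hlt⟩
  · rintro ⟨hi, hlt⟩; exact ⟨⟨fun he => lt_irrefl _ (he ▸ hlt), hi⟩, hlt⟩

end Rank

noncomputable def wfn (m : ℕ) (y : Fin m → ℝ) (j : ℕ) : ℝ :=
  if h : 1 ≤ j ∧ j ≤ m then y ⟨j-1, by omega⟩ else 0

def swapfn (a b : ℕ) (j : ℕ) : ℕ := if j = a then b else if j = b then a else j

lemma swapfn_involutive (a b : ℕ) : Function.Involutive (swapfn a b) := by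
  intro j
  simp only [swapfn]
  split_ifs <;> omega

lemma swapfn_injective (a b : ℕ) : Function.Injective (swapfn a b) :=
  (swapfn_involutive a b).injective

lemma image_swapfn_of_mem {a b : ℕ} {s : Finset ℕ} (ha : a ∈ s) (hb : b ∈ s) :
    s.image (swapfn a b) = s := by
  apply Finset.eq_of_subset_of_card_le
  · intro t ht
    rw [Finset.mem_image] at ht
    obtain ⟨i, hi, rfl⟩ := ht
    simp only [swapfn]
    split_ifs <;> assumption
  · rw [Finset.card_image_of_injective _ (swapfn_injective a b)]

lemma image_swapfn_of_not_mem {a b : ℕ} {s : Finset ℕ} (h : ∀ i ∈ s, i ≠ a ∧ i ≠ b) :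
    s.image (swapfn a b) = s := by
  rw [← Finset.image_id (s := s)]
  rw [Finset.image_image]
  apply Finset.image_congr
  intro i hi
  simp only [Function.comp, swapfn, id]
  rw [if_neg (h i hi).1, if_neg (h i hi).2]

lemma measurable_wfn (m : ℕ) (j : ℕ) : Measurable (fun y : Fin m → ℝ => wfn m y j) := by
  unfold wfn
  by_cases h : 1 ≤ j ∧ j ≤ m
  · simp only [dif_pos h]
    exact measurable_pi_apply _
  · simp only [dif_neg h]
    exact measurable_const

lemma wfn_comp_swap {m a b : ℕ} (ha1 : 1 ≤ a) (ham : a ≤ m) (hb1 : 1 ≤ b) (hbm : b ≤ m)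
    (y : Fin m → ℝ) {j : ℕ} (hj : 1 ≤ j ∧ j ≤ m) :
    wfn m (y ∘ (Equiv.swap (⟨a-1, by omega⟩ : Fin m) ⟨b-1, by omega⟩)) j
      = wfn m y (swapfn a b j) := by
  have hsj : 1 ≤ swapfn a b j ∧ swapfn a b j ≤ m := by
    simp only [swapfn]; split_ifs <;> omega
  rw [wfn, wfn, dif_pos hj, dif_pos hsj]
  simp only [Function.comp]
  congr 1
  rcases eq_or_ne j a with rfl | hja
  · rw [show (⟨j-1, by omega⟩ : Fin m) = ⟨j-1, by omega⟩ from rfl, Equiv.swap_apply_left]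
    simp only [swapfn, if_pos rfl, if_true]
  · rcases eq_or_ne j b with rfl | hjb
    · rw [Equiv.swap_apply_right]
      simp only [swapfn, if_neg hja, if_pos rfl, if_true]
    · rw [Equiv.swap_apply_of_ne_of_ne]
      · congr 1
        simp only [swapfn, if_neg hja, if_neg hjb]
      · intro hc
        apply hja
        have := Fin.mk.injEq (j-1) (by omega : j - 1 < m) (a-1) (by omega) ▸ hc
        have h2 : j - 1 = a - 1 := by exact_mod_cast Fin.mk.inj_iff.mp hc
        omega
      · intro hc
        apply hjb
        have h2 : j - 1 = b - 1 := by exact_mod_cast Fin.mk.inj_iff.mp hc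
        omega

lemma lintegral_comp_perm {m : ℕ} {ν : Measure ℝ} [IsProbabilityMeasure ν]
    (e : Fin m ≃ Fin m) {f : (Fin m → ℝ) → ENNReal} (hf : Measurable f) :
    ∫⁻ y, f (y ∘ e) ∂(Measure.pi fun _ : Fin m => ν)
      = ∫⁻ y, f y ∂(Measure.pi fun _ : Fin m => ν) := by
  have hmp := MeasureTheory.measurePreserving_piCongrLeft (fun _ : Fin m => ν) e.symm
  have := hmp.lintegral_comp hf
  rw [← this]
  apply lintegral_congr
  intro y
  congr 1
  funext i
  simp [MeasurableEquiv.piCongrLeft, Equiv.piCongrLeft_apply]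

lemma map_fun_eq_pi {Ω : Type*} [MeasurableSpace Ω] {P : Measure Ω} [IsProbabilityMeasure P]
    {β : Type*} [MeasurableSpace β] {Y : ℕ → Ω → β} (hmeas : ∀ i, Measurable (Y i))
    (hindep : iIndepFun Y P)
    {ν : Measure β} [IsProbabilityMeasure ν] (hlaw : ∀ i, P.map (Y i) = ν)
    {m : ℕ} (e : Fin m → ℕ) (he : Function.Injective e) :
    P.map (fun ω i => Y (e i) ω) = Measure.pi (fun _ : Fin m => ν) := by
  classical
  have hT : Measurable (fun ω i => Y (e i) ω) :=
    measurable_pi_lambda _ (fun i => hmeas (e i))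
  symm
  apply Measure.pi_eq
  intro A hA
  rw [Measure.map_apply hT (MeasurableSet.univ_pi hA)]
  have hpre : (fun ω i => Y (e i) ω) ⁻¹' (Set.univ.pi A)
      = ⋂ j ∈ Finset.univ.image e, Y j ⁻¹'
          (if h : ∃ i, e i = j then A h.choose else Set.univ) := by
    ext ω
    simp only [Set.mem_preimage, Set.mem_pi, Set.mem_univ, true_implies, Set.mem_iInter,
      Finset.mem_image, Finset.mem_univ, true_and]
    constructor
    · rintro h j ⟨i, rfl⟩
      have hex : ∃ i', e i' = e i := ⟨i, rfl⟩
      rw [dif_pos hex]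
      have : hex.choose = i := he hex.choose_spec
      rw [this]
      exact h i
    · intro h i
      have hex : ∃ i', e i' = e i := ⟨i, rfl⟩
      have := h (e i) ⟨i, rfl⟩
      rw [dif_pos hex] at this
      have h2 : hex.choose = i := he hex.choose_spec
      rwa [h2] at this
  rw [hpre]
  rw [hindep.measure_inter_preimage_eq_mul (Finset.univ.image e)
    (fun j hj => by
      by_cases h : ∃ i, e i = j
      · rw [dif_pos h]; exact hA _
      · rw [dif_neg h]; exact MeasurableSet.univ)]
  rw [Finset.prod_image (fun i _ i' _ h => he h)]
  apply Finset.prod_congr rfl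
  intro i _
  have hex : ∃ i', e i' = e i := ⟨i, rfl⟩
  rw [dif_pos hex]
  have h2 : hex.choose = i := he hex.choose_spec
  rw [h2, ← Measure.map_apply (hmeas (e i)) (hA i), hlaw (e i)]

lemma fubini_core {n : ℕ} {ν : Measure ℝ} [IsProbabilityMeasure ν]
    (g₁ : (Fin (n+1) → ℝ) → ℝ) (hg : Measurable g₁) :
    ∫⁻ y : Fin (n+2) → ℝ, ENNReal.ofReal (g₁ (fun j => y j.castSucc)) *
        (if y (Fin.last (n+1)) ≤ g₁ (fun j => y j.castSucc) then 1 else 0)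
        ∂(Measure.pi fun _ => ν)
    = ∫⁻ y : Fin (n+2) → ℝ, ENNReal.ofReal (g₁ (fun j => y j.castSucc)) *
        ν (Set.Iic (g₁ (fun j => y j.castSucc))) ∂(Measure.pi fun _ => ν) := by
  have hmp := MeasureTheory.measurePreserving_piFinSuccAbove
    (fun _ : Fin (n+2) => ν) (Fin.last (n+1))
  set φ := MeasurableEquiv.piFinSuccAbove (fun _ : Fin (n+2) => ℝ) (Fin.last (n+1)) with hφ
  have hφ2 : ∀ y : Fin (n+2) → ℝ, (φ y).2 = fun j => y j.castSucc := by
    intro y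
    funext j
    simp [φ, MeasurableEquiv.piFinSuccAbove, Fin.succAbove_last, Fin.init]
  have hφ1 : ∀ y : Fin (n+2) → ℝ, (φ y).1 = y (Fin.last (n+1)) := by
    intro y
    simp [φ, MeasurableEquiv.piFinSuccAbove]
  set H : ℝ × (Fin (n+1) → ℝ) → ENNReal :=
    fun p => ENNReal.ofReal (g₁ p.2) * (if p.1 ≤ g₁ p.2 then 1 else 0) with hH
  set H2 : ℝ × (Fin (n+1) → ℝ) → ENNReal :=
    fun p => ENNReal.ofReal (g₁ p.2) * ν (Set.Iic (g₁ p.2)) with hH2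
  have hHmeas : Measurable H := by
    apply Measurable.mul
    · exact (ENNReal.measurable_ofReal.comp (hg.comp measurable_snd))
    · exact Measurable.ite (measurableSet_le measurable_fst (hg.comp measurable_snd))
        measurable_const measurable_const
  have hνIic : Measurable (fun c : ℝ => ν (Set.Iic c)) := by
    apply Monotone.measurable
    intro a b hab
    exact measure_mono (Set.Iic_subset_Iic.mpr hab)
  have hH2meas : Measurable H2 := by
    apply Measurable.mul
    · exact (ENNReal.measurable_ofReal.comp (hg.comp measurable_snd))
    · exact hνIic.comp (hg.comp measurable_snd)
  have e1 : ∫⁻ y : Fin (n+2) → ℝ, ENNReal.ofReal (g₁ (fun j => y j.castSucc)) *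
        (if y (Fin.last (n+1)) ≤ g₁ (fun j => y j.castSucc) then 1 else 0)
        ∂(Measure.pi fun _ => ν) = ∫⁻ p, H p ∂(ν.prod (Measure.pi fun _ : Fin (n+1) => ν)) := by
    rw [← hmp.lintegral_comp hHmeas]
    apply lintegral_congr
    intro y
    simp only [hH]
    rw [hφ1, hφ2]
  have e2 : ∫⁻ y : Fin (n+2) → ℝ, ENNReal.ofReal (g₁ (fun j => y j.castSucc)) *
        ν (Set.Iic (g₁ (fun j => y j.castSucc)))
        ∂(Measure.pi fun _ => ν) = ∫⁻ p, H2 p ∂(ν.prod (Measure.pi fun _ : Fin (n+1) => ν)) := by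
    rw [← hmp.lintegral_comp hH2meas]
    apply lintegral_congr
    intro y
    simp only [hH2]
    rw [hφ2]
  rw [e1, e2, MeasureTheory.lintegral_prod_symm _ hHmeas.aemeasurable,
    MeasureTheory.lintegral_prod_symm _ hH2meas.aemeasurable]
  apply lintegral_congr
  intro u
  simp only [hH, hH2]
  rw [lintegral_const_mul _ (by
      exact Measurable.ite (measurableSet_le measurable_id measurable_const)
        measurable_const measurable_const),
    lintegral_const_mul _ measurable_const]
  congr 1
  rw [lintegral_const, measure_univ, mul_one]
  have hind : ∀ z : ℝ, (if z ≤ g₁ u then (1:ENNReal) else 0)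
      = (Set.Iic (g₁ u)).indicator (fun _ => 1) z := by
    intro z
    rw [Set.indicator_apply]
    simp [Set.mem_Iic]
  rw [lintegral_congr hind, lintegral_indicator measurableSet_Iic, setLIntegral_one]
-- new lemmas
lemma wfn_comp_swap_full {m a b : ℕ} (ha1 : 1 ≤ a) (ham : a ≤ m) (hb1 : 1 ≤ b) (hbm : b ≤ m)
    (y : Fin m → ℝ) :
    wfn m (y ∘ (Equiv.swap (⟨a-1, by omega⟩ : Fin m) ⟨b-1, by omega⟩))
      = fun j => wfn m y (swapfn a b j) := by
  funext j
  by_cases hj : 1 ≤ j ∧ j ≤ m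
  · exact wfn_comp_swap ha1 ham hb1 hbm y hj
  · have hsj : swapfn a b j = j := by
      simp only [swapfn]
      split_ifs <;> omega
    rw [hsj, wfn, wfn, dif_neg hj, dif_neg hj]

lemma rnk_comp {s : Finset ℕ} {v : ℕ → ℝ} {σ : ℕ → ℕ} (hσ : Set.InjOn σ s) (j : ℕ) :
    rnk s (fun i => v (σ i)) j = rnk (s.image σ) v (σ j) := by
  classical
  unfold rnk
  rw [Finset.filter_image,
    Finset.card_image_of_injOn (Set.InjOn.mono (fun i hi => (Finset.mem_filter.mp hi).1) hσ)]

lemma measurable_rnk {α : Type*} [MeasurableSpace α] (s : Finset ℕ) (j : ℕ)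
    {v : ℕ → α → ℝ} (hv : ∀ i, Measurable (v i)) :
    Measurable (fun a => rnk s (fun i => v i a) j) := by
  classical
  unfold rnk
  simp only [Finset.card_filter]
  apply Finset.measurable_sum
  intro i _
  exact Measurable.ite (measurableSet_lt (hv i) (hv j)) measurable_const measurable_const

/-- main swap invariance principle -/
lemma lintegral_swap_invariance {m a b : ℕ} {ν : Measure ℝ} [IsProbabilityMeasure ν]
    (ha1 : 1 ≤ a) (ham : a ≤ m) (hb1 : 1 ≤ b) (hbm : b ≤ m)
    (F : (ℕ → ℝ) → ENNReal) (hF : Measurable (fun y : Fin m → ℝ => F (wfn m y))) :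
    ∫⁻ y, F (fun j => wfn m y (swapfn a b j)) ∂(Measure.pi fun _ : Fin m => ν)
      = ∫⁻ y, F (wfn m y) ∂(Measure.pi fun _ : Fin m => ν) := by
  have h1 : ∀ y : Fin m → ℝ, F (fun j => wfn m y (swapfn a b j))
      = (fun y' => F (wfn m y'))
          (y ∘ (Equiv.swap (⟨a-1, by omega⟩ : Fin m) ⟨b-1, by omega⟩)) := by
    intro y
    exact congrArg F (wfn_comp_swap_full ha1 ham hb1 hbm y).symm
  rw [lintegral_congr h1]
  exact lintegral_comp_perm _ hF

lemma orderStat_const {s : Finset ℕ} {k : ℕ} (c : ℝ) (hk1 : 1 ≤ k) (hks : k ≤ s.card) :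
    orderStat s (fun _ => c) k = c := by
  apply le_antisymm
  · rw [orderStat_le_iff hk1 hks]
    have : s.filter (fun _ : ℕ => c ≤ c) = s := Finset.filter_true_of_mem (fun i _ => le_refl c)
    rw [this]
    exact hks
  · rw [le_orderStat_iff hk1 hks]
    have : s.filter (fun _ : ℕ => c < c) = ∅ :=
      Finset.filter_false_of_mem (fun i _ => lt_irrefl c)
    rw [this]
    simp only [Finset.card_empty]; omega


/-- **An order-statistic identity.** If `X, X₁, …, X_{n+1}` are i.i.d. with a density,
`x ∈ ℝ^d` and `1 ≤ k ≤ n`, then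
`E(‖X-x‖_{(k,n)} F_{‖X-x‖}(‖X-x‖_{(k,n)})) = (k/(n+1)) E(‖X-x‖_{(k+1,n+1)})`,
where `‖X-x‖_{(k,m)}` is the `k`-th order statistic of a sample of size `m` of `‖X-x‖`. -/
theorem orderStat_cdf_identity
    {Ω : Type*} [MeasurableSpace Ω] (P : Measure Ω) [IsProbabilityMeasure P]
    (d n k : ℕ) (hk : 1 ≤ k) (hkn : k ≤ n)
    (Xs : ℕ → Ω → EuclideanSpace ℝ (Fin d))
    (μ : Measure (EuclideanSpace ℝ (Fin d))) [IsProbabilityMeasure μ]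
    (hXsmeas : ∀ i, Measurable (Xs i))
    (hlawXs : ∀ i, Measure.map (Xs i) P = μ)
    (hindep : iIndepFun Xs P)
    (hdensity : μ ≪ MeasureTheory.volume)
    (x : EuclideanSpace ℝ (Fin d))
    (F : ℝ → ℝ) (hF : ∀ t, F t = (μ {z | ‖z - x‖ ≤ t}).toReal) :
    ∫ ω, orderStat (Finset.Icc 1 n) (fun i => ‖Xs i ω - x‖) k
        * F (orderStat (Finset.Icc 1 n) (fun i => ‖Xs i ω - x‖) k) ∂P
      = ((k : ℝ) / ((n : ℝ) + 1))
        * ∫ ω, orderStat (Finset.Icc 1 (n + 1)) (fun i => ‖Xs i ω - x‖) (k + 1) ∂P := by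
  classical
  have hcard1 : (Finset.Icc 1 n).card = n := by rw [Nat.card_Icc]; omega
  have hcard2 : (Finset.Icc 1 (n+1)).card = n+1 := by rw [Nat.card_Icc]; omega
  rcases Nat.eq_zero_or_pos d with rfl | hd
  · -- trivial case: the space is a single point
    have hz : ∀ (i : ℕ) (ω : Ω), ‖Xs i ω - x‖ = (0:ℝ) := fun i ω => by
      rw [Subsingleton.elim (Xs i ω - x) 0, norm_zero]
    have h1 : ∀ ω, orderStat (Finset.Icc 1 n) (fun i => ‖Xs i ω - x‖) k = 0 := by
      intro ω
      rw [orderStat_congr (v' := fun _ => (0:ℝ)) (fun i _ => hz i ω)]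
      exact orderStat_const 0 hk (by omega)
    have h2 : ∀ ω, orderStat (Finset.Icc 1 (n+1)) (fun i => ‖Xs i ω - x‖) (k+1) = 0 := by
      intro ω
      rw [orderStat_congr (v' := fun _ => (0:ℝ)) (fun i _ => hz i ω)]
      exact orderStat_const 0 (by omega) (by omega)
    simp only [h1, h2, zero_mul, integral_zero, mul_zero]
  -- main case `d ≥ 1`
  set f0 : EuclideanSpace ℝ (Fin d) → ℝ := fun z => ‖z - x‖ with hf0def
  have hf0 : Measurable f0 := (continuous_id.sub continuous_const).norm.measurable
  set ν : Measure ℝ := μ.map f0 with hνdef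
  haveI : IsProbabilityMeasure ν := Measure.isProbabilityMeasure_map hf0.aemeasurable
  have hFt : ∀ t, F t = (ν (Set.Iic t)).toReal := by
    intro t
    rw [hF t, hνdef, Measure.map_apply hf0 measurableSet_Iic]
    rfl
  haveI : Nontrivial (EuclideanSpace ℝ (Fin d)) := by
    haveI : Nonempty (Fin d) := ⟨⟨0, hd⟩⟩
    infer_instance
  have hatom : ∀ a : ℝ, ν {a} = 0 := by
    intro a
    rw [hνdef, Measure.map_apply hf0 (measurableSet_singleton a)]
    have hsp : f0 ⁻¹' {a} = Metric.sphere x a := by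
      ext z
      simp [hf0def, dist_eq_norm]
    rw [hsp]
    exact hdensity (Measure.addHaar_sphere volume x a)
  set Y : ℕ → Ω → ℝ := fun i ω => ‖Xs i ω - x‖ with hYdef
  have hYmeas : ∀ i, Measurable (Y i) := fun i => hf0.comp (hXsmeas i)
  have hYindep : iIndepFun Y P :=
    hindep.comp (fun _ => f0) (fun _ => hf0)
  have hYlaw : ∀ i, P.map (Y i) = ν := by
    intro i
    rw [hνdef, ← hlawXs i]
    exact (Measure.map_map hf0 (hXsmeas i)).symm
  set T : Ω → (Fin (n+2) → ℝ) := fun ω i => Y ((i:ℕ)+1) ω with hTdef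
  have hTmeas : Measurable T := measurable_pi_lambda _ (fun i => hYmeas _)
  have hTlaw : P.map T = Measure.pi (fun _ : Fin (n+2) => ν) :=
    map_fun_eq_pi hYmeas hYindep hYlaw (fun i => (i:ℕ)+1)
      (fun i j h => by
        apply Fin.ext
        have h' : (i:ℕ)+1 = (j:ℕ)+1 := h
        omega)
  have hwT : ∀ (ω : Ω) (j : ℕ), 1 ≤ j → j ≤ n+2 → wfn (n+2) (T ω) j = Y j ω := by
    intro ω j hj1 hj2
    rw [wfn, dif_pos ⟨hj1, hj2⟩]
    show Y (_ + 1) ω = Y j ω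
    congr 1
    show j - 1 + 1 = j
    omega
  have hn2 : (n+2) ∉ Finset.Icc 1 n := by simp [Finset.mem_Icc]
  have hn1 : (n+1) ∉ Finset.Icc 1 n := by simp [Finset.mem_Icc]
  set s' : Finset ℕ := insert (n+2) (Finset.Icc 1 n) with hs'def
  have hcard3 : s'.card = n + 1 := by rw [hs'def, Finset.card_insert_of_notMem hn2, hcard1]
  have hs'sub : ∀ j ∈ s', 1 ≤ j ∧ j ≤ n+2 := by
    intro j hj
    rw [hs'def, Finset.mem_insert, Finset.mem_Icc] at hj
    omega
  -- functions on the product space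
  set g : (Fin (n+2) → ℝ) → ℝ := fun y => orderStat (Finset.Icc 1 n) (wfn (n+2) y) k
    with hgdef
  have hgmeas : Measurable g :=
    measurable_orderStat hk (by rw [hcard1]; exact hkn) (fun i => measurable_wfn _ i)
  set G : (Fin (n+2) → ℝ) → ℝ := fun y => orderStat (Finset.Icc 1 (n+1)) (wfn (n+2) y) (k+1)
    with hGdef
  have hGmeas : Measurable G :=
    measurable_orderStat (by omega) (by rw [hcard2]; omega)
      (fun i => measurable_wfn _ i)
  set G' : (Fin (n+2) → ℝ) → ℝ := fun y => orderStat s' (wfn (n+2) y) (k+1) with hG'def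
  have hG'meas : Measurable G' :=
    measurable_orderStat (by omega) (by rw [hcard3]; omega)
      (fun i => measurable_wfn _ i)
  have hrnkmeas : ∀ j, Measurable (fun y : Fin (n+2) → ℝ => rnk s' (wfn (n+2) y) j) :=
    fun j => measurable_rnk s' j (fun i => measurable_wfn _ i)
  -- pointwise identification on Ω
  have hgT : ∀ ω, orderStat (Finset.Icc 1 n) (fun i => ‖Xs i ω - x‖) k = g (T ω) := by
    intro ω
    apply orderStat_congr
    intro i hi
    rw [Finset.mem_Icc] at hi
    exact (hwT ω i hi.1 (by omega)).symm
  have hGT : ∀ ω, orderStat (Finset.Icc 1 (n+1)) (fun i => ‖Xs i ω - x‖) (k+1) = G (T ω) := by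
    intro ω
    apply orderStat_congr
    intro i hi
    rw [Finset.mem_Icc] at hi
    exact (hwT ω i hi.1 (by omega)).symm
  -- measurability and positivity of F
  have hFmono : Monotone F := by
    intro a b hab
    rw [hFt a, hFt b]
    exact ENNReal.toReal_mono (measure_ne_top ν _) (measure_mono (Set.Iic_subset_Iic.mpr hab))
  have hFmeas : Measurable F := hFmono.measurable
  have hFnn : ∀ t, 0 ≤ F t := fun t => (hFt t) ▸ ENNReal.toReal_nonneg
  have hgTnn : ∀ ω, 0 ≤ g (T ω) := by
    intro ω
    rw [← hgT ω]
    exact orderStat_nonneg hk (by rw [hcard1]; exact hkn) (fun i _ => norm_nonneg _)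
  have hGTnn : ∀ ω, 0 ≤ G (T ω) := by
    intro ω
    rw [← hGT ω]
    exact orderStat_nonneg (by omega) (by rw [hcard2]; omega)
      (fun i _ => norm_nonneg _)
  -- reduction to lintegrals over the product measure
  have hmeasL : Measurable (fun ω => g (T ω) * F (g (T ω))) :=
    (hgmeas.comp hTmeas).mul (hFmeas.comp (hgmeas.comp hTmeas))
  have hL : ∫ ω, orderStat (Finset.Icc 1 n) (fun i => ‖Xs i ω - x‖) k
        * F (orderStat (Finset.Icc 1 n) (fun i => ‖Xs i ω - x‖) k) ∂P
      = (∫⁻ y, ENNReal.ofReal (g y * F (g y))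
          ∂(Measure.pi fun _ : Fin (n+2) => ν)).toReal := by
    rw [← hTlaw, lintegral_map (f := fun y => ENNReal.ofReal (g y * F (g y)))
      (by exact ENNReal.measurable_ofReal.comp (hgmeas.mul (hFmeas.comp hgmeas))) hTmeas]
    simp only [hgT]
    exact integral_eq_lintegral_of_nonneg_ae
      (Filter.Eventually.of_forall (fun ω => mul_nonneg (hgTnn ω) (hFnn _)))
      hmeasL.aestronglyMeasurable
  have hR : ∫ ω, orderStat (Finset.Icc 1 (n+1)) (fun i => ‖Xs i ω - x‖) (k+1) ∂P
      = (∫⁻ y, ENNReal.ofReal (G y) ∂(Measure.pi fun _ : Fin (n+2) => ν)).toReal := by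
    rw [← hTlaw, lintegral_map (f := fun y => ENNReal.ofReal (G y))
      (by exact ENNReal.measurable_ofReal.comp hGmeas) hTmeas]
    simp only [hGT]
    exact integral_eq_lintegral_of_nonneg_ae
      (Filter.Eventually.of_forall (fun ω => hGTnn ω))
      (hGmeas.comp hTmeas).aestronglyMeasurable
  -- ties are null
  have hties : ∀ a b : ℕ, a ≠ b → P {ω | Y a ω = Y b ω} = 0 := by
    intro a b hab
    have hindepab : IndepFun (Y a) (Y b) P := hYindep.indepFun hab
    have hmap : P.map (fun ω => (Y a ω, Y b ω)) = ν.prod ν := by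
      have := (indepFun_iff_map_prod_eq_prod_map_map
        (hYmeas a).aemeasurable (hYmeas b).aemeasurable).mp hindepab
      rw [this, hYlaw a, hYlaw b]
    have hdiag : MeasurableSet {p : ℝ × ℝ | p.1 = p.2} :=
      measurableSet_eq_fun measurable_fst measurable_snd
    have hEq : {ω | Y a ω = Y b ω} = (fun ω => (Y a ω, Y b ω)) ⁻¹' {p | p.1 = p.2} := rfl
    rw [hEq, ← Measure.map_apply ((hYmeas a).prodMk (hYmeas b)) hdiag, hmap,
      Measure.prod_apply hdiag]
    have hfib : ∀ z : ℝ, (Prod.mk z ⁻¹' {p : ℝ × ℝ | p.1 = p.2}) = {z} := by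
      intro z
      ext w
      simp [eq_comm]
    rw [lintegral_congr (fun z => by rw [hfib z, hatom z]), lintegral_zero]
  have hpairnull : ∀ a b : ℕ, a ∈ s' → b ∈ s' → a ≠ b →
      (Measure.pi fun _ : Fin (n+2) => ν) {y | wfn (n+2) y a = wfn (n+2) y b} = 0 := by
    intro a b ha hb hab
    obtain ⟨ha1, ha2⟩ := hs'sub a ha
    obtain ⟨hb1, hb2⟩ := hs'sub b hb
    have hmeasset : MeasurableSet {y : Fin (n+2) → ℝ | wfn (n+2) y a = wfn (n+2) y b} :=
      measurableSet_eq_fun (measurable_wfn _ a) (measurable_wfn _ b)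
    rw [← hTlaw, Measure.map_apply hTmeas hmeasset]
    have hsetEq : T ⁻¹' {y | wfn (n+2) y a = wfn (n+2) y b} = {ω | Y a ω = Y b ω} := by
      ext ω
      simp only [Set.mem_preimage, Set.mem_setOf_eq]
      rw [hwT ω a ha1 ha2, hwT ω b hb1 hb2]
    rw [hsetEq]
    exact hties a b hab
  have hInj : ∀ᵐ y ∂(Measure.pi fun _ : Fin (n+2) => ν), Set.InjOn (wfn (n+2) y) ↑s' := by
    have hcnt : (↑s' : Set ℕ).Countable := s'.countable_toSet
    have h1 : ∀ᵐ y ∂(Measure.pi fun _ : Fin (n+2) => ν),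
        ∀ a ∈ (↑s' : Set ℕ), ∀ b ∈ (↑s' : Set ℕ), a ≠ b → wfn (n+2) y a ≠ wfn (n+2) y b := by
      rw [MeasureTheory.ae_ball_iff hcnt]
      intro a ha
      rw [MeasureTheory.ae_ball_iff hcnt]
      intro b hb
      by_cases hab : a = b
      · exact Filter.Eventually.of_forall (fun y h => absurd hab h)
      · rw [ae_iff]
        have : {y : Fin (n+2) → ℝ | ¬(a ≠ b → wfn (n+2) y a ≠ wfn (n+2) y b)}
            = {y | wfn (n+2) y a = wfn (n+2) y b} := by
          ext y
          simp [hab]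
        rw [this]
        exact hpairnull a b ha hb hab
    filter_upwards [h1] with y h
    intro a ha b hb heq
    by_contra hne
    exact h a ha b hb hne heq
  -- auxiliary function of the first n+1 coordinates
  set g₁ : (Fin (n+1) → ℝ) → ℝ := fun u => orderStat (Finset.Icc 1 n) (wfn (n+1) u) k
    with hg₁def
  have hg₁meas : Measurable g₁ :=
    measurable_orderStat hk (by rw [hcard1]; exact hkn) (fun i => measurable_wfn _ i)
  have hgcast : ∀ y : Fin (n+2) → ℝ, g y = g₁ (fun j => y j.castSucc) := by
    intro y
    apply orderStat_congr
    intro i hi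
    rw [Finset.mem_Icc] at hi
    rw [wfn, wfn, dif_pos ⟨hi.1, by omega⟩, dif_pos ⟨hi.1, by omega⟩]
    rfl
  have hwlast : ∀ y : Fin (n+2) → ℝ, wfn (n+2) y (n+2) = y (Fin.last (n+1)) := by
    intro y
    rw [wfn, dif_pos ⟨by omega, le_refl _⟩]
    congr 1
  -- step 1 : express F through ν
  have hstep1 : ∫⁻ y, ENNReal.ofReal (g y * F (g y)) ∂(Measure.pi fun _ : Fin (n+2) => ν)
      = ∫⁻ y, ENNReal.ofReal (g y) * ν (Set.Iic (g y))
          ∂(Measure.pi fun _ : Fin (n+2) => ν) := by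
    apply lintegral_congr
    intro y
    rcases le_or_gt 0 (g y) with h | h
    · rw [hFt, ENNReal.ofReal_mul h, ENNReal.ofReal_toReal (measure_ne_top ν _)]
    · rw [ENNReal.ofReal_of_nonpos
        (mul_nonpos_iff.mpr (Or.inr ⟨le_of_lt h, hFnn _⟩)),
        ENNReal.ofReal_of_nonpos (le_of_lt h), zero_mul]
  -- step 2 : Fubini
  have hstep2 : ∫⁻ y, ENNReal.ofReal (g y) * ν (Set.Iic (g y))
          ∂(Measure.pi fun _ : Fin (n+2) => ν)
      = ∫⁻ y, ENNReal.ofReal (g y) * (if wfn (n+2) y (n+2) ≤ g y then 1 else 0)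
          ∂(Measure.pi fun _ : Fin (n+2) => ν) := by
    have hcore := fubini_core (ν := ν) g₁ hg₁meas
    have e1 : ∫⁻ y, ENNReal.ofReal (g y) * (if wfn (n+2) y (n+2) ≤ g y then 1 else 0)
          ∂(Measure.pi fun _ : Fin (n+2) => ν)
        = ∫⁻ y : Fin (n+2) → ℝ, ENNReal.ofReal (g₁ (fun j => y j.castSucc)) *
            (if y (Fin.last (n+1)) ≤ g₁ (fun j => y j.castSucc) then 1 else 0)
          ∂(Measure.pi fun _ : Fin (n+2) => ν) :=
      lintegral_congr (fun y => by rw [← hgcast y, ← hwlast y])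
    have e2 : ∫⁻ y, ENNReal.ofReal (g y) * ν (Set.Iic (g y))
          ∂(Measure.pi fun _ : Fin (n+2) => ν)
        = ∫⁻ y : Fin (n+2) → ℝ, ENNReal.ofReal (g₁ (fun j => y j.castSucc)) *
            ν (Set.Iic (g₁ (fun j => y j.castSucc)))
          ∂(Measure.pi fun _ : Fin (n+2) => ν) :=
      lintegral_congr (fun y => by rw [← hgcast y])
    rw [e1, e2, hcore]
  -- step 3 : pointwise event rewrite
  have herase : s'.erase (n+2) = Finset.Icc 1 n := by
    rw [hs'def]
    exact Finset.erase_insert hn2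
  have hevent : ∀ y : Fin (n+2) → ℝ,
      (wfn (n+2) y (n+2) ≤ g y) ↔ rnk s' (wfn (n+2) y) (n+2) < k := by
    intro y
    rw [hgdef]
    rw [le_orderStat_iff hk (by rw [hcard1]; exact hkn)]
    rw [← rnk_erase (s := s') (v := wfn (n+2) y) (j := n+2), herase]
  have hstep3 : ∫⁻ y, ENNReal.ofReal (g y) * (if wfn (n+2) y (n+2) ≤ g y then 1 else 0)
          ∂(Measure.pi fun _ : Fin (n+2) => ν)
      = ∫⁻ y, ENNReal.ofReal (G' y) * (if rnk s' (wfn (n+2) y) (n+2) < k then 1 else 0)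
          ∂(Measure.pi fun _ : Fin (n+2) => ν) := by
    apply lintegral_congr
    intro y
    by_cases he : wfn (n+2) y (n+2) ≤ g y
    · have hins : G' y = g y := orderStat_insert hn2 hk (by rw [hcard1]; exact hkn) he
      rw [if_pos he, if_pos ((hevent y).mp he), hins]
    · rw [if_neg he, if_neg (fun hc => he ((hevent y).mpr hc)), mul_zero, mul_zero]
  -- the integrands of the symmetrised family are measurable
  have hIfmeas : ∀ j : ℕ, Measurable (fun y : Fin (n+2) → ℝ =>
      ENNReal.ofReal (G' y) * (if rnk s' (wfn (n+2) y) j < k then 1 else 0)) := by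
    intro j
    exact (ENNReal.measurable_ofReal.comp hG'meas).mul
      (Measurable.ite (measurableSet_lt (hrnkmeas j) measurable_const)
        measurable_const measurable_const)
  -- step 4 : symmetry
  have hsym : ∀ j ∈ s',
      ∫⁻ y, ENNReal.ofReal (G' y) * (if rnk s' (wfn (n+2) y) j < k then 1 else 0)
          ∂(Measure.pi fun _ : Fin (n+2) => ν)
      = ∫⁻ y, ENNReal.ofReal (G' y) * (if rnk s' (wfn (n+2) y) (n+2) < k then 1 else 0)
          ∂(Measure.pi fun _ : Fin (n+2) => ν) := by
    intro j hj
    obtain ⟨hj1, hj2⟩ := hs'sub j hj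
    have hσinj : Set.InjOn (swapfn j (n+2)) ↑s' := (swapfn_injective j (n+2)).injOn
    have himg : s'.image (swapfn j (n+2)) = s' :=
      image_swapfn_of_mem hj (by rw [hs'def]; exact Finset.mem_insert_self _ _)
    have key := lintegral_swap_invariance (ν := ν) hj1 hj2
      (by omega : 1 ≤ n+2) (le_refl (n+2))
      (fun v => ENNReal.ofReal (orderStat s' v (k+1)) * (if rnk s' v j < k then 1 else 0))
      (by exact hIfmeas j)
    rw [← key]
    apply lintegral_congr
    intro y
    have h1 : orderStat s' (fun i => wfn (n+2) y (swapfn j (n+2) i)) (k+1) = G' y := by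
      rw [← orderStat_image hσinj, himg]
    have h2 : rnk s' (fun i => wfn (n+2) y (swapfn j (n+2) i)) j
        = rnk s' (wfn (n+2) y) (n+2) := by
      rw [rnk_comp hσinj j, himg]
      congr 1
      simp [swapfn]
    rw [h1, h2]
  -- step 5 : summing over j
  have hcast3 : ((s'.card : ℕ) : ENNReal) = (n : ENNReal) + 1 := by
    rw [hcard3]
    push_cast
    ring
  have hsum : ((n : ENNReal) + 1) *
      (∫⁻ y, ENNReal.ofReal (G' y) * (if rnk s' (wfn (n+2) y) (n+2) < k then 1 else 0)
          ∂(Measure.pi fun _ : Fin (n+2) => ν))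
      = (∫⁻ y, ENNReal.ofReal (G' y) ∂(Measure.pi fun _ : Fin (n+2) => ν)) * k := by
    have e1 : ∑ j ∈ s',
        ∫⁻ y, ENNReal.ofReal (G' y) * (if rnk s' (wfn (n+2) y) j < k then 1 else 0)
          ∂(Measure.pi fun _ : Fin (n+2) => ν)
        = ((n : ENNReal) + 1) *
          (∫⁻ y, ENNReal.ofReal (G' y) * (if rnk s' (wfn (n+2) y) (n+2) < k then 1 else 0)
            ∂(Measure.pi fun _ : Fin (n+2) => ν)) := by
      rw [Finset.sum_congr rfl hsym, Finset.sum_const, nsmul_eq_mul, hcast3]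
    rw [← e1, ← lintegral_finset_sum s' (fun j _ => hIfmeas j)]
    have e2 : ∀ᵐ y ∂(Measure.pi fun _ : Fin (n+2) => ν),
        ∑ j ∈ s', ENNReal.ofReal (G' y) * (if rnk s' (wfn (n+2) y) j < k then 1 else 0)
          = ENNReal.ofReal (G' y) * (k : ENNReal) := by
      filter_upwards [hInj] with y hy
      rw [← Finset.mul_sum]
      congr 1
      rw [Finset.sum_boole]
      norm_cast
      exact card_rnk_lt hy (by rw [hcard3]; omega)
    rw [lintegral_congr_ae e2]
    exact lintegral_mul_const _ (ENNReal.measurable_ofReal.comp hG'meas)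
  -- step 6 : replace s' by Icc 1 (n+1)
  have hIcc : Finset.Icc 1 (n+1) = insert (n+1) (Finset.Icc 1 n) := by
    ext i
    simp only [Finset.mem_Icc, Finset.mem_insert]
    omega
  have himg2 : (Finset.Icc 1 (n+1)).image (swapfn (n+1) (n+2)) = s' := by
    rw [hIcc, Finset.image_insert]
    have hsw : swapfn (n+1) (n+2) (n+1) = n+2 := by simp [swapfn]
    rw [hsw, image_swapfn_of_not_mem (fun i hi => by
      rw [Finset.mem_Icc] at hi
      omega), hs'def]
  have hR'R : ∫⁻ y, ENNReal.ofReal (G' y) ∂(Measure.pi fun _ : Fin (n+2) => ν)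
      = ∫⁻ y, ENNReal.ofReal (G y) ∂(Measure.pi fun _ : Fin (n+2) => ν) := by
    have key := lintegral_swap_invariance (ν := ν) (a := n+1) (b := n+2)
      (by omega) (by omega) (by omega) (le_refl _)
      (fun v => ENNReal.ofReal (orderStat (Finset.Icc 1 (n+1)) v (k+1)))
      (by exact ENNReal.measurable_ofReal.comp hGmeas)
    rw [← key]
    apply lintegral_congr
    intro y
    congr 1
    calc G' y = orderStat ((Finset.Icc 1 (n+1)).image (swapfn (n+1) (n+2)))
          (wfn (n+2) y) (k+1) := by rw [himg2]
      _ = orderStat (Finset.Icc 1 (n+1))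
          (fun i => wfn (n+2) y (swapfn (n+1) (n+2) i)) (k+1) :=
        orderStat_image ((swapfn_injective _ _).injOn)
  -- combine everything in ENNReal
  have hne0 : ((n : ENNReal) + 1) ≠ 0 := by simp
  have hneT : ((n : ENNReal) + 1) ≠ ⊤ := by simp
  have hchain : ∫⁻ y, ENNReal.ofReal (g y * F (g y)) ∂(Measure.pi fun _ : Fin (n+2) => ν)
      = ((k : ENNReal) / ((n : ENNReal) + 1)) *
        ∫⁻ y, ENNReal.ofReal (G y) ∂(Measure.pi fun _ : Fin (n+2) => ν) := by
    rw [hstep1, hstep2, hstep3]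
    rw [hR'R] at hsum
    calc ∫⁻ y, ENNReal.ofReal (G' y) * (if rnk s' (wfn (n+2) y) (n+2) < k then 1 else 0)
          ∂(Measure.pi fun _ : Fin (n+2) => ν)
        = ((n : ENNReal) + 1)⁻¹ * (((n : ENNReal) + 1) *
            ∫⁻ y, ENNReal.ofReal (G' y) * (if rnk s' (wfn (n+2) y) (n+2) < k then 1 else 0)
              ∂(Measure.pi fun _ : Fin (n+2) => ν)) := by
          rw [← mul_assoc, ENNReal.inv_mul_cancel hne0 hneT, one_mul]
      _ = ((n : ENNReal) + 1)⁻¹ *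
            ((∫⁻ y, ENNReal.ofReal (G y) ∂(Measure.pi fun _ : Fin (n+2) => ν)) * k) := by
          rw [hsum]
      _ = ((k : ENNReal) / ((n : ENNReal) + 1)) *
            ∫⁻ y, ENNReal.ofReal (G y) ∂(Measure.pi fun _ : Fin (n+2) => ν) := by
          rw [ENNReal.div_eq_inv_mul]
          ring
  -- conclude
  rw [hL, hR, hchain, ENNReal.toReal_mul]
  congr 1
  rw [ENNReal.toReal_div]
  rw [ENNReal.toReal_add (ENNReal.natCast_ne_top n) ENNReal.one_ne_top]
  simp
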